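/- For any regulated function f : [a,b] → E into a metric space and any c > 0 and λ > 1, there exists a step function f^c : [a,b] → E with sup_{t∈[a,b]} d(f(t), f^c(t)) ≤ c/2 and total variation TV(f^c,[a,b],0) ≤ λ · TV(f,[a,b],(λ−1)c/(2λ)). Consequently, inf over g with ‖f − g‖_∞ ≤ c/2 of the total variation of g satisfies TV(f,[a,b],c) ≤ inf_g TV(g,[a,b],0) ≤ inf_{λ>1} λ · TV(f,[a,b],(λ−1)c/(2λ)). -/

import Mathlib

open Set Filter Topology ENNReal

noncomputable def truncVar {E : Type*} [PseudoMetricSpace E] (f : ℝ → E) (a b δ : ℝ) : ℝ≥0∞ :=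
  ⨆ (n : ℕ) (t : Fin (n + 1) → ℝ) (_ : StrictMono t) (_ : ∀ i, t i ∈ Set.Icc a b),
    ENNReal.ofReal (∑ i : Fin n, max (dist (f (t i.succ)) (f (t i.castSucc)) - δ) 0)

def Regulated {E : Type*} [PseudoMetricSpace E] (f : ℝ → E) (a b : ℝ) : Prop :=
  (∀ t ∈ Set.Ico a b, ∃ L, Filter.Tendsto f (nhdsWithin t (Set.Ioi t)) (nhds L)) ∧
  (∀ t ∈ Set.Ioc a b, ∃ L, Filter.Tendsto f (nhdsWithin t (Set.Iio t)) (nhds L))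

def IsStepOn {E : Type*} (f : ℝ → E) (a b : ℝ) : Prop :=
  ∃ n : ℕ, ∃ t : Fin (n + 1) → ℝ, Monotone t ∧ t 0 = a ∧ t (Fin.last n) = b ∧
    ∀ i : Fin n, ∀ x ∈ Set.Ioo (t i.castSucc) (t i.succ),
      ∀ y ∈ Set.Ioo (t i.castSucc) (t i.succ), f x = f y


namespace StepAux
open Classical

variable {E : Type*} [PseudoMetricSpace E]

noncomputable def rlim (f : ℝ → E) (t : ℝ) : E :=
  if h : ∃ L, Filter.Tendsto f (nhdsWithin t (Set.Ioi t)) (nhds L) then h.choose else f t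

lemma rlim_tendsto {f : ℝ → E} {t : ℝ}
    (h : ∃ L, Filter.Tendsto f (nhdsWithin t (Set.Ioi t)) (nhds L)) :
    Filter.Tendsto f (nhdsWithin t (Set.Ioi t)) (nhds (rlim f t)) := by
  rw [rlim, dif_pos h]; exact h.choose_spec

def exc (f : ℝ → E) (b c : ℝ) (τ : ℝ) (v : E) : Set ℝ :=
  {t ∈ Set.Ioc τ b | c / 2 < dist (f t) v}

noncomputable def gseq (f : ℝ → E) (a b c : ℝ) : ℕ → ℝ × E
  | 0 => (a, if dist (rlim f a) (f a) < c / 2 then f a else rlim f a)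
  | (k+1) =>
    let p := gseq f a b c k
    if b ≤ p.1 then p else
      let τ' := sInf (insert b (exc f b c p.1 p.2))
      (τ', if c / 2 < dist (f τ') p.2 ∧ dist (rlim f τ') (f τ') < c / 2 then f τ'
           else rlim f τ')

noncomputable def tau (f : ℝ → E) (a b c : ℝ) (k : ℕ) : ℝ := (gseq f a b c k).1
noncomputable def vv (f : ℝ → E) (a b c : ℝ) (k : ℕ) : E := (gseq f a b c k).2

section

variable (f : ℝ → E) (a b c : ℝ)

lemma tau_zero : tau f a b c 0 = a := rfl

lemma exc_bddBelow (τ' : ℝ) (v : E) (h : τ' ≤ b) :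
    BddBelow (insert b (exc f b c τ' v)) := by
  refine ⟨τ', ?_⟩
  rintro x (rfl | hx)
  · exact h
  · exact le_of_lt hx.1.1

lemma tau_succ {k : ℕ} (h : tau f a b c k < b) :
    tau f a b c (k+1) = sInf (insert b (exc f b c (tau f a b c k) (vv f a b c k))) := by
  have h' : ¬ b ≤ (gseq f a b c k).1 := not_le.2 h
  show (gseq f a b c (k+1)).1 = _
  simp only [gseq, if_neg h']
  rfl

lemma vv_succ {k : ℕ} (h : tau f a b c k < b) :
    vv f a b c (k+1) =
      (if c / 2 < dist (f (tau f a b c (k+1))) (vv f a b c k) ∧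
          dist (rlim f (tau f a b c (k+1))) (f (tau f a b c (k+1))) < c / 2
       then f (tau f a b c (k+1)) else rlim f (tau f a b c (k+1))) := by
  have h' : ¬ b ≤ (gseq f a b c k).1 := not_le.2 h
  have ht := tau_succ f a b c h
  show (gseq f a b c (k+1)).2 = _
  simp only [gseq, if_neg h']
  rw [tau_succ f a b c h]
  rfl

lemma gseq_stat {k : ℕ} (h : b ≤ tau f a b c k) :
    gseq f a b c (k+1) = gseq f a b c k := by
  have h' : b ≤ (gseq f a b c k).1 := h
  simp only [gseq, if_pos h']

lemma vv_zero : vv f a b c 0 = if dist (rlim f a) (f a) < c / 2 then f a else rlim f a := rfl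

lemma tau_le (hab : a ≤ b) : ∀ k, tau f a b c k ≤ b := by
  intro k
  induction k with
  | zero => exact hab
  | succ k ih =>
    rcases lt_or_ge (tau f a b c k) b with h | h
    · rw [tau_succ f a b c h]
      exact csInf_le (exc_bddBelow f b c _ _ (le_of_lt h)) (Set.mem_insert _ _)
    · have := congrArg Prod.fst (gseq_stat f a b c h)
      rw [tau, this]; exact ih

lemma tau_mono_succ (hab : a ≤ b) : ∀ k, tau f a b c k ≤ tau f a b c (k+1) := by
  intro k
  rcases lt_or_ge (tau f a b c k) b with h | h
  · rw [tau_succ f a b c h]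
    refine le_csInf ⟨b, Set.mem_insert _ _⟩ ?_
    rintro x (rfl | hx)
    · exact le_of_lt h
    · exact le_of_lt hx.1.1
  · exact le_of_eq (congrArg Prod.fst (gseq_stat f a b c h)).symm

lemma tau_mono (hab : a ≤ b) : Monotone (tau f a b c) :=
  monotone_nat_of_le_succ (tau_mono_succ f a b c hab)

lemma a_le_tau (hab : a ≤ b) (k : ℕ) : a ≤ tau f a b c k :=
  (tau_zero f a b c) ▸ tau_mono f a b c hab (Nat.zero_le k)

lemma hinv (hc : 0 < c) : ∀ k, dist (rlim f (tau f a b c k)) (vv f a b c k) < c / 2 := by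
  intro k
  induction k with
  | zero =>
    rw [tau_zero, vv_zero]
    split_ifs with h
    · exact h
    · simpa using half_pos hc
  | succ k ih =>
    rcases lt_or_ge (tau f a b c k) b with h | h
    · rw [vv_succ f a b c h]
      split_ifs with hcond
      · exact hcond.2
      · simpa using half_pos hc
    · have h1 := congrArg Prod.fst (gseq_stat f a b c h)
      have h2 := congrArg Prod.snd (gseq_stat f a b c h)
      rw [tau, vv, h1, h2]; exact ih

lemma vv_mem : ∀ k, vv f a b c k = f (tau f a b c k) ∨ vv f a b c k = rlim f (tau f a b c k) := by
  intro k
  induction k with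
  | zero =>
    rw [tau_zero, vv_zero]
    split_ifs
    · exact Or.inl rfl
    · exact Or.inr rfl
  | succ k ih =>
    rcases lt_or_ge (tau f a b c k) b with h | h
    · rw [vv_succ f a b c h]
      split_ifs
      · exact Or.inl rfl
      · exact Or.inr rfl
    · have h1 := congrArg Prod.fst (gseq_stat f a b c h)
      have h2 := congrArg Prod.snd (gseq_stat f a b c h)
      rw [tau, vv, h1, h2]; exact ih


lemma tau_lt_succ (hab : a < b) (hc : 0 < c) (hf : Regulated f a b) {k : ℕ}
    (h : tau f a b c k < b) : tau f a b c k < tau f a b c (k+1) := by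
  have hR := rlim_tendsto (hf.1 (tau f a b c k) ⟨a_le_tau f a b c hab.le k, h⟩)
  have hγ : 0 < c / 2 - dist (rlim f (tau f a b c k)) (vv f a b c k) := by
    have := hinv f a b c hc k; linarith
  have hev := Metric.tendsto_nhds.mp hR _ hγ
  obtain ⟨η, hη, hsub⟩ := mem_nhdsGT_iff_exists_Ioc_subset.mp hev
  rw [tau_succ f a b c h]
  have hmin : min η b ≤ sInf (insert b (exc f b c (tau f a b c k) (vv f a b c k))) := by
    refine le_csInf ⟨b, Set.mem_insert _ _⟩ ?_
    rintro x (rfl | hx)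
    · exact min_le_right _ _
    · by_contra hlt
      push_neg at hlt
      have hxIoc : x ∈ Set.Ioc (tau f a b c k) η :=
        ⟨hx.1.1, le_of_lt (lt_of_lt_of_le hlt (min_le_left _ _))⟩
      have h1 := hsub hxIoc
      simp only [Set.mem_setOf_eq] at h1
      have h2 := dist_triangle (f x) (rlim f (tau f a b c k)) (vv f a b c k)
      have h3 := hx.2
      linarith
  exact lt_of_lt_of_le (lt_min hη h) hmin

lemma plateau (hab : a ≤ b) {k : ℕ} {t : ℝ} (h : tau f a b c k < b)
    (h1 : tau f a b c k < t) (h2 : t ≤ b) (h3 : t < tau f a b c (k+1)) :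
    dist (f t) (vv f a b c k) ≤ c / 2 := by
  by_contra hgt
  push_neg at hgt
  have hmem : t ∈ insert b (exc f b c (tau f a b c k) (vv f a b c k)) :=
    Set.mem_insert_of_mem _ ⟨⟨h1, h2⟩, hgt⟩
  have := csInf_le (exc_bddBelow f b c _ _ h.le) hmem
  rw [tau_succ f a b c h] at h3
  linarith

lemma exc_acc (hab : a < b) (hc : 0 < c) {k : ℕ} (h : tau f a b c k < b)
    (h2 : tau f a b c (k+1) < b) :
    ∀ z, tau f a b c (k+1) < z →
      ∃ u ∈ exc f b c (tau f a b c k) (vv f a b c k), u < z := by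
  intro z hz
  have hS : (exc f b c (tau f a b c k) (vv f a b c k)).Nonempty := by
    by_contra hemp
    rw [Set.not_nonempty_iff_eq_empty] at hemp
    have : tau f a b c (k+1) = b := by
      rw [tau_succ f a b c h, hemp, insert_empty_eq, csInf_singleton]
    exact absurd this (ne_of_lt h2)
  have hbd : BddBelow (exc f b c (tau f a b c k) (vv f a b c k)) :=
    ⟨tau f a b c k, fun x hx => hx.1.1.le⟩
  have hins : sInf (insert b (exc f b c (tau f a b c k) (vv f a b c k)))
      = b ⊓ sInf (exc f b c (tau f a b c k) (vv f a b c k)) := csInf_insert hbd hS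
  have hlt : sInf (exc f b c (tau f a b c k) (vv f a b c k)) < z := by
    rcases le_total (sInf (exc f b c (tau f a b c k) (vv f a b c k))) b with hcase | hcase
    · have : tau f a b c (k+1) = sInf (exc f b c (tau f a b c k) (vv f a b c k)) := by
        rw [tau_succ f a b c h, hins, inf_eq_right.2 hcase]
      rw [← this]; exact hz
    · have : tau f a b c (k+1) = b := by
        rw [tau_succ f a b c h, hins, inf_eq_left.2 hcase]
      exact absurd this (ne_of_lt h2)
  exact exists_lt_of_csInf_lt hS hlt

lemma exists_tau_eq (hab : a < b) (hc : 0 < c) (hf : Regulated f a b) :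
    ∃ n, tau f a b c n = b := by
  by_contra hno
  push_neg at hno
  have hlt : ∀ n, tau f a b c n < b := fun n =>
    lt_of_le_of_ne (tau_le f a b c hab.le n) (hno n)
  have hstrict : ∀ n, tau f a b c n < tau f a b c (n+1) := fun n =>
    tau_lt_succ f a b c hab hc hf (hlt n)
  have hbdd : BddAbove (Set.range (tau f a b c)) := by
    refine ⟨b, ?_⟩; rintro _ ⟨n, rfl⟩; exact (hlt n).le
  set T := ⨆ n, tau f a b c n with hT
  have htend : Tendsto (tau f a b c) atTop (𝓝 T) :=
    tendsto_atTop_ciSup (tau_mono f a b c hab.le) hbdd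
  have htlt : ∀ n, tau f a b c n < T := fun n =>
    lt_of_lt_of_le (hstrict n) (le_ciSup hbdd (n+1))
  have haT : a < T := by have := htlt 0; rwa [tau_zero] at this
  have hTb : T ≤ b := ciSup_le fun n => (hlt n).le
  obtain ⟨L, hL⟩ := hf.2 T ⟨haT, hTb⟩
  have hev := Metric.tendsto_nhds.mp hL (c/8) (by linarith)
  obtain ⟨η, hη, hsub⟩ := mem_nhdsLT_iff_exists_Ioo_subset.mp hev
  obtain ⟨k, hk⟩ := (htend.eventually_const_lt hη).exists
  have hball : ∀ s, tau f a b c k < s → s < T → dist (f s) L < c/8 := by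
    intro s hs1 hs2
    have := hsub ⟨lt_trans hk hs1, hs2⟩
    simpa using this
  have hvL : dist (vv f a b c k) L ≤ c/8 := by
    rcases vv_mem f a b c k with hv | hv
    · rw [hv]
      have := hsub ⟨hk, htlt k⟩
      simpa using this.le
    · rw [hv]
      have hRt := rlim_tendsto (hf.1 (tau f a b c k) ⟨a_le_tau f a b c hab.le k, hlt k⟩)
      have hdt : Tendsto (fun s => dist (f s) L) (nhdsWithin (tau f a b c k) (Set.Ioi _))
          (nhds (dist (rlim f (tau f a b c k)) L)) := hRt.dist tendsto_const_nhds
      refine le_of_tendsto hdt ?_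
      filter_upwards [Ioo_mem_nhdsGT_of_mem ⟨le_refl _, htlt k⟩] with s hs
      exact (hball s hs.1 hs.2).le
  obtain ⟨u, huS, huT⟩ := exc_acc f a b c hab hc (hlt k) (hlt (k+1)) T (htlt (k+1))
  have hfu := hball u huS.1.1 huT
  have htri := dist_triangle (f u) L (vv f a b c k)
  have hexc := huS.2
  rw [dist_comm] at hvL
  have : dist (f u) (vv f a b c k) < c/4 := by linarith
  linarith


lemma tau_stat (hab : a ≤ b) {N j : ℕ} (hNb : tau f a b c N = b) (hj : N ≤ j) :
    tau f a b c j = b := by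
  induction j with
  | zero => exact le_antisymm (tau_le f a b c hab 0) (Nat.le_zero.mp hj ▸ hNb.ge)
  | succ j ih =>
    rcases Nat.lt_or_ge N (j+1) with h | h
    · have hj' : N ≤ j := Nat.lt_succ_iff.mp h
      have hb : b ≤ tau f a b c j := (ih hj').ge
      have := congrArg Prod.fst (gseq_stat f a b c hb)
      show (gseq f a b c (j+1)).1 = b
      rw [this]; exact ih hj'
    · exact le_antisymm (tau_le f a b c hab (j+1)) ((Nat.le_antisymm hj h) ▸ hNb.ge)

lemma tau_strict_on (hab : a < b) (hc : 0 < c) (hf : Regulated f a b) {N : ℕ}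
    (hNlt : ∀ k, k < N → tau f a b c k < b) :
    ∀ i j, i < j → j ≤ N → tau f a b c i < tau f a b c j := by
  intro i j hij hjN
  induction j with
  | zero => omega
  | succ j ih =>
    have hjlt : tau f a b c j < b := hNlt j (by omega)
    have hstep := tau_lt_succ f a b c hab hc hf hjlt
    rcases Nat.lt_or_ge i j with h | h
    · exact lt_trans (ih h (by omega)) hstep
    · have : i = j := by omega
      rw [this]; exact hstep

/-- greatest k ≤ N with tau k < t -/
noncomputable def kidx (f : ℝ → E) (a b c : ℝ) (N : ℕ) (t : ℝ) : ℕ :=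
  Nat.findGreatest (fun k => tau f a b c k < t) N

lemma kidx_le (N : ℕ) (t : ℝ) : kidx f a b c N t ≤ N :=
  Nat.findGreatest_le (P := fun k => tau f a b c k < t) N

lemma kidx_spec {N : ℕ} {t : ℝ} (h : a < t) : tau f a b c (kidx f a b c N t) < t := by
  have h0 : tau f a b c 0 < t := by rwa [tau_zero]
  exact Nat.findGreatest_spec (P := fun k => tau f a b c k < t) (Nat.zero_le N) h0

lemma kidx_lt (hab : a ≤ b) {N : ℕ} {t : ℝ} (hNb : tau f a b c N = b)
    (h : a < t) (h2 : t ≤ b) : kidx f a b c N t < N := by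
  rcases Nat.lt_or_ge (kidx f a b c N t) N with h' | h'
  · exact h'
  · exfalso
    have heq : kidx f a b c N t = N := le_antisymm (kidx_le f a b c N t) h'
    have := kidx_spec f a b c (N := N) h
    rw [heq, hNb] at this
    linarith

lemma kidx_succ_ge {N : ℕ} {t : ℝ} (hab : a ≤ b) (hNb : tau f a b c N = b)
    (h2 : t ≤ b) : t ≤ tau f a b c (kidx f a b c N t + 1) := by
  rcases Nat.lt_or_ge (kidx f a b c N t) N with h' | h'
  · by_contra hlt
    push_neg at hlt
    have h2' : kidx f a b c N t + 1 ≤ N := by omega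
    have h3 := Nat.le_findGreatest (P := fun k => tau f a b c k < t) h2' hlt
    have h4 : Nat.findGreatest (fun k => tau f a b c k < t) N = kidx f a b c N t := rfl
    omega
  · have : N ≤ kidx f a b c N t + 1 := by omega
    rw [tau_stat f a b c hab hNb this]; exact h2

lemma kidx_succ_gt {N : ℕ} {t : ℝ} (hab : a ≤ b) (hNb : tau f a b c N = b)
    (h2 : t ≤ b) (hnode : ¬ ∃ j, tau f a b c j = t) :
    t < tau f a b c (kidx f a b c N t + 1) := by
  rcases lt_or_eq_of_le (kidx_succ_ge f a b c hab hNb h2) with h | h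
  · exact h
  · exact absurd ⟨_, h.symm⟩ hnode

lemma kidx_mono {N : ℕ} {s t : ℝ} (h : s ≤ t) : kidx f a b c N s ≤ kidx f a b c N t :=
  Nat.findGreatest_mono (fun k hk => lt_of_lt_of_le hk h) le_rfl

lemma kidx_node (hab : a < b) (hc : 0 < c) (hf : Regulated f a b) {N j : ℕ}
    (hNb : tau f a b c N = b) (hNlt : ∀ k, k < N → tau f a b c k < b)
    (hjN : j ≤ N) (hj : 0 < j) : kidx f a b c N (tau f a b c j) = j - 1 := by
  have hstrict := tau_strict_on f a b c hab hc hf hNlt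
  refine le_antisymm ?_ ?_
  · by_contra hgt
    push_neg at hgt
    have hle : j ≤ kidx f a b c N (tau f a b c j) := by omega
    have := kidx_spec f a b c (N := N) (t := tau f a b c j) ?ha
    case ha =>
      have := hstrict 0 j hj hjN
      rwa [tau_zero] at this
    have hmono := tau_mono f a b c hab.le hle
    linarith
  · refine Nat.le_findGreatest (by omega) ?_
    exact hstrict (j-1) j (by omega) hjN


noncomputable def nodeval (f : ℝ → E) (a b c : ℝ) (k : ℕ) : E :=
  if k = 0 then f a
  else if c / 2 < dist (f (tau f a b c k)) (vv f a b c (k-1)) then f (tau f a b c k)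
  else vv f a b c (k-1)

noncomputable def useq (f : ℝ → E) (a b c : ℝ) (m : ℕ) : E :=
  if m % 2 = 0 then nodeval f a b c (m / 2) else vv f a b c (m / 2)

noncomputable def Fcum (f : ℝ → E) (a b c : ℝ) (j : ℕ) : ℝ :=
  ∑ m ∈ Finset.range j, dist (useq f a b c (m+1)) (useq f a b c m)

noncomputable def fc (f : ℝ → E) (a b c : ℝ) (N : ℕ) (t : ℝ) : E :=
  if t = a then f a
  else if ∃ j, tau f a b c j = t then nodeval f a b c (kidx f a b c N t + 1)
  else vv f a b c (kidx f a b c N t)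

noncomputable def rho (f : ℝ → E) (a b c : ℝ) (N : ℕ) (t : ℝ) : ℕ :=
  if t = a then 0
  else if ∃ j, tau f a b c j = t then 2 * (kidx f a b c N t + 1)
  else 2 * kidx f a b c N t + 1

lemma useq_even (k : ℕ) : useq f a b c (2*k) = nodeval f a b c k := by
  unfold useq
  rw [if_pos (by omega)]
  congr 1
  omega

lemma useq_odd (k : ℕ) : useq f a b c (2*k+1) = vv f a b c k := by
  unfold useq
  rw [if_neg (by omega)]
  congr 1
  omega

lemma nodeval_zero : nodeval f a b c 0 = f a := by unfold nodeval; rw [if_pos rfl]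

lemma fc_eq_useq (N : ℕ) (t : ℝ) : fc f a b c N t = useq f a b c (rho f a b c N t) := by
  unfold fc rho
  split_ifs with h1 h2
  · have h0 := useq_even f a b c 0
    rw [show (2:ℕ)*0 = 0 by rfl] at h0
    rw [h0, nodeval_zero]
  · exact (useq_even f a b c _).symm
  · exact (useq_odd f a b c _).symm

/-- get a canonical node index -/
lemma node_index (hab : a < b) {N : ℕ} (hNb : tau f a b c N = b) {t : ℝ}
    (ht : t ∈ Set.Icc a b) (hne : t ≠ a) (h : ∃ j, tau f a b c j = t) :
    ∃ j, 1 ≤ j ∧ j ≤ N ∧ tau f a b c j = t := by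
  obtain ⟨j, hj⟩ := h
  rcases Nat.lt_or_ge N j with hN | hN
  · have hjb : t = b := by rw [← hj, tau_stat f a b c hab.le hNb hN.le]
    have hN0 : 1 ≤ N := by
      by_contra h0
      have hN0' : N = 0 := by omega
      rw [hN0', tau_zero] at hNb
      exact absurd hNb (ne_of_lt hab)
    exact ⟨N, hN0, le_rfl, by rw [hNb, ← hjb]⟩
  · have hj1 : 1 ≤ j := by
      rcases Nat.eq_zero_or_pos j with h0 | h0
      · exfalso; apply hne; rw [← hj, h0, tau_zero]
      · exact h0
    exact ⟨j, hj1, hN, hj⟩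

lemma fc_node (hab : a < b) (hc : 0 < c) (hf : Regulated f a b) {N j : ℕ}
    (hNb : tau f a b c N = b) (hNlt : ∀ k, k < N → tau f a b c k < b)
    (hj1 : 1 ≤ j) (hjN : j ≤ N) :
    fc f a b c N (tau f a b c j) = nodeval f a b c j := by
  unfold fc
  rw [if_neg, if_pos ⟨j, rfl⟩, kidx_node f a b c hab hc hf hNb hNlt hjN (by omega)]
  · congr 1; omega
  · intro h
    have := tau_strict_on f a b c hab hc hf hNlt 0 j (by omega) hjN
    rw [tau_zero] at this
    rw [h] at this
    exact lt_irrefl _ this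

lemma fc_dist (hab : a < b) (hc : 0 < c) (hf : Regulated f a b) {N : ℕ}
    (hNb : tau f a b c N = b) (hNlt : ∀ k, k < N → tau f a b c k < b)
    {t : ℝ} (ht : t ∈ Set.Icc a b) :
    dist (f t) (fc f a b c N t) ≤ c / 2 := by
  by_cases h1 : t = a
  · subst h1
    unfold fc
    rw [if_pos rfl]
    simp [le_of_lt (half_pos hc)]
  have hat : a < t := lt_of_le_of_ne ht.1 (Ne.symm h1)
  by_cases h2 : ∃ j, tau f a b c j = t
  · obtain ⟨j, hj1, hjN, hj⟩ := node_index f a b c hab hNb ht h1 h2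
    rw [← hj, fc_node f a b c hab hc hf hNb hNlt hj1 hjN]
    unfold nodeval
    rw [if_neg (by omega)]
    split_ifs with h3
    · simp [le_of_lt (half_pos hc)]
    · push_neg at h3
      exact h3
  · unfold fc
    rw [if_neg h1, if_neg h2]
    have hK := kidx_spec f a b c (N := N) hat
    have hKb : tau f a b c (kidx f a b c N t) < b := lt_of_lt_of_le hK ht.2
    exact plateau f a b c hab.le hKb hK ht.2 (kidx_succ_gt f a b c hab.le hNb ht.2 h2)


lemma fc_interior (hab : a < b) {N : ℕ} {i : ℕ} (hiN : i < N) {x : ℝ}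
    (hx : x ∈ Set.Ioo (tau f a b c i) (tau f a b c (i+1))) :
    fc f a b c N x = vv f a b c i := by
  have hxa : x ≠ a := by
    have h := a_le_tau f a b c hab.le i
    intro he; rw [he] at hx; linarith [hx.1]
  have hnode : ¬ ∃ j, tau f a b c j = x := by
    rintro ⟨j, hj⟩
    rcases le_or_gt j i with h | h
    · have := tau_mono f a b c hab.le h
      rw [hj] at this; linarith [hx.1]
    · have h' : i + 1 ≤ j := h
      have := tau_mono f a b c hab.le h'
      rw [hj] at this; linarith [hx.2]
  have hK : kidx f a b c N x = i := by
    refine le_antisymm ?_ (Nat.le_findGreatest (by omega) hx.1)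
    by_contra hgt
    push_neg at hgt
    have h' : i + 1 ≤ kidx f a b c N x := hgt
    have h2 := tau_mono f a b c hab.le h'
    have hspec := kidx_spec f a b c (N := N) (lt_of_le_of_lt (a_le_tau f a b c hab.le i) hx.1)
    linarith [hx.2]
  unfold fc
  rw [if_neg hxa, if_neg hnode, hK]

lemma fc_isStep (hab : a < b) {N : ℕ} (hNb : tau f a b c N = b) :
    IsStepOn (fc f a b c N) a b := by
  refine ⟨N, fun i => tau f a b c i, ?_, tau_zero f a b c, hNb, ?_⟩
  · intro i j hij
    exact tau_mono f a b c hab.le hij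
  · intro i x hx y hy
    simp only [Fin.coe_castSucc, Fin.val_succ] at hx hy
    rw [fc_interior f a b c hab i.2 hx, fc_interior f a b c hab i.2 hy]

lemma rho_le (hab : a < b) {N : ℕ} (hNb : tau f a b c N = b)
    {t : ℝ} (ht : t ∈ Set.Icc a b) : rho f a b c N t ≤ 2*N := by
  unfold rho
  split_ifs with h1 h2
  · omega
  · have hat : a < t := lt_of_le_of_ne ht.1 (Ne.symm h1)
    have := kidx_lt f a b c hab.le hNb hat ht.2
    omega
  · have hat : a < t := lt_of_le_of_ne ht.1 (Ne.symm h1)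
    have htb : t < b := by
      rcases lt_or_eq_of_le ht.2 with h | h
      · exact h
      · exact absurd ⟨N, h ▸ hNb⟩ h2
    have := kidx_lt f a b c hab.le hNb hat htb.le
    omega

lemma rho_mono (hab : a < b) (hc : 0 < c) (hf : Regulated f a b) {N : ℕ}
    (hNb : tau f a b c N = b) (hNlt : ∀ k, k < N → tau f a b c k < b)
    {x y : ℝ} (hx : x ∈ Set.Icc a b) (hy : y ∈ Set.Icc a b) (hxy : x < y) :
    rho f a b c N x ≤ rho f a b c N y := by
  have hay : a < y := lt_of_le_of_lt hx.1 hxy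
  have hyne : y ≠ a := ne_of_gt hay
  unfold rho
  rcases eq_or_ne x a with hxa | hxa
  · rw [if_pos hxa, if_neg hyne]
    split_ifs <;> omega
  rw [if_neg hxa, if_neg hyne]
  have hax : a < x := lt_of_le_of_ne hx.1 (Ne.symm hxa)
  by_cases h2 : ∃ j, tau f a b c j = x
  · obtain ⟨jx, hjx1, hjxN, hjx⟩ := node_index f a b c hab hNb hx hxa h2
    have hKx : kidx f a b c N x = jx - 1 := by
      rw [← hjx]; exact kidx_node f a b c hab hc hf hNb hNlt hjxN (by omega)
    rw [if_pos h2, hKx]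
    by_cases h3 : ∃ j, tau f a b c j = y
    · obtain ⟨jy, hjy1, hjyN, hjy⟩ := node_index f a b c hab hNb hy hyne h3
      have hKy : kidx f a b c N y = jy - 1 := by
        rw [← hjy]; exact kidx_node f a b c hab hc hf hNb hNlt hjyN (by omega)
      rw [if_pos h3, hKy]
      have : jx ≤ jy := by
        by_contra hgt
        push_neg at hgt
        have := tau_mono f a b c hab.le hgt.le
        rw [hjx, hjy] at this
        linarith
      omega
    · rw [if_neg h3]
      have : jx ≤ kidx f a b c N y := by
        refine Nat.le_findGreatest hjxN ?_
        rw [hjx]; exact hxy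
      omega
  · rw [if_neg h2]
    by_cases h3 : ∃ j, tau f a b c j = y
    · obtain ⟨jy, hjy1, hjyN, hjy⟩ := node_index f a b c hab hNb hy hyne h3
      have hKy : kidx f a b c N y = jy - 1 := by
        rw [← hjy]; exact kidx_node f a b c hab hc hf hNb hNlt hjyN (by omega)
      rw [if_pos h3, hKy]
      have : kidx f a b c N x < jy := by
        by_contra hge
        push_neg at hge
        have h4 := tau_mono f a b c hab.le hge
        have h5 := kidx_spec f a b c (N := N) hax
        rw [hjy] at h4
        linarith
      omega
    · rw [if_neg h3]
      have := kidx_mono f a b c (N := N) hxy.le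
      omega

lemma Fcum_nonneg (j : ℕ) : 0 ≤ Fcum f a b c j :=
  Finset.sum_nonneg fun _ _ => dist_nonneg

lemma Fcum_mono {i j : ℕ} (h : i ≤ j) : Fcum f a b c i ≤ Fcum f a b c j :=
  Finset.sum_le_sum_of_subset_of_nonneg (Finset.range_subset_range.2 h)
    (fun _ _ _ => dist_nonneg)

lemma dist_useq_le {i j : ℕ} (h : i ≤ j) :
    dist (useq f a b c i) (useq f a b c j) ≤ Fcum f a b c j - Fcum f a b c i := by
  induction j, h using Nat.le_induction with
  | base => simp
  | succ j hj ih =>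
    have hF : Fcum f a b c (j+1) = Fcum f a b c j + dist (useq f a b c (j+1)) (useq f a b c j) :=
      Finset.sum_range_succ _ _
    have htri := dist_triangle (useq f a b c i) (useq f a b c j) (useq f a b c (j+1))
    have hcomm : dist (useq f a b c j) (useq f a b c (j+1))
        = dist (useq f a b c (j+1)) (useq f a b c j) := dist_comm _ _
    linarith

lemma fin_telescope : ∀ {n : ℕ} (G : Fin (n+1) → ℝ),
    ∑ i : Fin n, (G i.succ - G i.castSucc) = G (Fin.last n) - G 0 := by
  intro n
  induction n with
  | zero => intro G; simp
  | succ n ih =>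
    intro G
    rw [Fin.sum_univ_castSucc]
    have hterm : ∀ i : Fin n, G (i.castSucc).succ - G (i.castSucc).castSucc
        = (G ∘ Fin.castSucc) i.succ - (G ∘ Fin.castSucc) i.castSucc := by
      intro i
      rfl
    rw [Finset.sum_congr rfl (fun i _ => hterm i), ih (G ∘ Fin.castSucc)]
    have h1 : (Fin.last n).succ = Fin.last (n+1) := Fin.succ_last n
    simp only [Function.comp, h1, Fin.castSucc_zero]
    ring

lemma truncVar_fc_le (hab : a < b) (hc : 0 < c) (hf : Regulated f a b) {N : ℕ}
    (hNb : tau f a b c N = b) (hNlt : ∀ k, k < N → tau f a b c k < b) :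
    truncVar (fc f a b c N) a b 0 ≤ ENNReal.ofReal (Fcum f a b c (2*N)) := by
  refine iSup_le fun n => iSup_le fun t => iSup_le fun hst => iSup_le fun hmem => ?_
  refine ENNReal.ofReal_le_ofReal ?_
  have hterm : ∀ i : Fin n,
      max (dist (fc f a b c N (t i.succ)) (fc f a b c N (t i.castSucc)) - 0) 0
        ≤ Fcum f a b c (rho f a b c N (t i.succ)) - Fcum f a b c (rho f a b c N (t i.castSucc)) := by
    intro i
    have hlt : t i.castSucc < t i.succ := hst (Fin.castSucc_lt_succ (i := i))
    have hrho := rho_mono f a b c hab hc hf hNb hNlt (hmem i.castSucc) (hmem i.succ) hlt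
    have hd : dist (fc f a b c N (t i.succ)) (fc f a b c N (t i.castSucc))
        ≤ Fcum f a b c (rho f a b c N (t i.succ)) - Fcum f a b c (rho f a b c N (t i.castSucc)) := by
      rw [fc_eq_useq, fc_eq_useq, dist_comm]
      exact dist_useq_le f a b c hrho
    have hd0 : (0:ℝ) ≤ Fcum f a b c (rho f a b c N (t i.succ)) - Fcum f a b c (rho f a b c N (t i.castSucc)) :=
      sub_nonneg.2 (Fcum_mono f a b c hrho)
    rw [sub_zero]
    exact max_le hd hd0
  calc ∑ i : Fin n, max (dist (fc f a b c N (t i.succ)) (fc f a b c N (t i.castSucc)) - 0) 0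
      ≤ ∑ i : Fin n, (Fcum f a b c (rho f a b c N (t i.succ)) - Fcum f a b c (rho f a b c N (t i.castSucc))) :=
        Finset.sum_le_sum fun i _ => hterm i
    _ = Fcum f a b c (rho f a b c N (t (Fin.last n))) - Fcum f a b c (rho f a b c N (t 0)) :=
        fin_telescope (fun i => Fcum f a b c (rho f a b c N (t i)))
    _ ≤ Fcum f a b c (2*N) - 0 := by
        have h1 : Fcum f a b c (rho f a b c N (t (Fin.last n))) ≤ Fcum f a b c (2*N) :=
          Fcum_mono f a b c (rho_le f a b c hab hNb (hmem _))
        have h2 := Fcum_nonneg f a b c (rho f a b c N (t 0))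
        linarith
    _ = Fcum f a b c (2*N) := sub_zero _


lemma key_ineq {l δ J d e c' : ℝ} (hl : 1 < l) (hδ : l * δ = (l-1) * (c'/2))
    (hJ : c'/2 ≤ J) (hd : J - e ≤ d) (he : 0 ≤ e) : J - l*e ≤ l * max (d - δ) 0 := by
  have h1 : l * (d - δ) ≤ l * max (d - δ) 0 :=
    mul_le_mul_of_nonneg_left (le_max_left _ _) (by linarith)
  nlinarith [mul_le_mul_of_nonneg_left hJ (by linarith : (0:ℝ) ≤ l - 1),
    mul_le_mul_of_nonneg_left hd (by linarith : (0:ℝ) ≤ l)]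

lemma exists_w (hab : a < b) (hc : 0 < c) (hf : Regulated f a b) {N : ℕ}
    (hNlt : ∀ k', k' < N → tau f a b c k' < b) {k : ℕ} (hk : k < N) {ε : ℝ} (hε : 0 < ε) :
    ∃ w, tau f a b c k < w ∧ w < tau f a b c (k+1) ∧
      dist (f w) (rlim f (tau f a b c k)) ≤ ε := by
  have hkb := hNlt k hk
  have hR := rlim_tendsto (hf.1 (tau f a b c k) ⟨a_le_tau f a b c hab.le k, hkb⟩)
  have hev := Metric.tendsto_nhds.mp hR ε hε
  have hIoo : Set.Ioo (tau f a b c k) (tau f a b c (k+1)) ∈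
      nhdsWithin (tau f a b c k) (Set.Ioi (tau f a b c k)) :=
    Ioo_mem_nhdsGT_of_mem ⟨le_refl _, tau_lt_succ f a b c hab hc hf hkb⟩
  obtain ⟨w, hw1, hw2⟩ := (hev.and (eventually_mem_set.2 hIoo)).exists
  exact ⟨w, hw2.1, hw2.2, hw1.le⟩

lemma acc_jump (hab : a < b) (hc : 0 < c) (hf : Regulated f a b) {N : ℕ}
    (hNlt : ∀ k', k' < N → tau f a b c k' < b) {k : ℕ} (hkN : k + 1 < N)
    (hcond : dist (f (tau f a b c (k+1))) (vv f a b c k) ≤ c/2) :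
    c/2 ≤ dist (rlim f (tau f a b c (k+1))) (vv f a b c k) := by
  by_contra hlt
  push_neg at hlt
  have hjb := hNlt (k+1) hkN
  have hR := rlim_tendsto (hf.1 (tau f a b c (k+1)) ⟨a_le_tau f a b c hab.le _, hjb⟩)
  have hγ : 0 < c/2 - dist (rlim f (tau f a b c (k+1))) (vv f a b c k) := by linarith
  have hev := Metric.tendsto_nhds.mp hR _ hγ
  obtain ⟨η, hη, hsub⟩ := mem_nhdsGT_iff_exists_Ioc_subset.mp hev
  obtain ⟨u, huS, hu⟩ := exc_acc f a b c hab hc (hNlt k (by omega)) hjb (min η b)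
    (lt_min hη hjb)
  have hul : tau f a b c (k+1) ≤ u := by
    have hbd := exc_bddBelow f b c (tau f a b c k) (vv f a b c k) (hNlt k (by omega)).le
    have := csInf_le hbd (Set.mem_insert_of_mem _ huS)
    rwa [← tau_succ f a b c (hNlt k (by omega))] at this
  have hune : tau f a b c (k+1) ≠ u := by
    intro he
    have := huS.2
    rw [← he] at this
    linarith
  have huIoc : u ∈ Set.Ioc (tau f a b c (k+1)) η :=
    ⟨lt_of_le_of_ne hul hune, le_of_lt (lt_of_lt_of_le hu (min_le_left _ _))⟩
  have h1 := hsub huIoc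
  simp only [Set.mem_setOf_eq] at h1
  have h2 := dist_triangle (f u) (rlim f (tau f a b c (k+1))) (vv f a b c k)
  have h3 := huS.2
  linarith

lemma snoc_strictMono {m : ℕ} {x : Fin (m+1) → ℝ} (hst : StrictMono x) {p' : ℝ}
    (hp' : x (Fin.last m) < p') : StrictMono (Fin.snoc x p' : Fin (m+2) → ℝ) := by
  intro i j hij
  rcases Fin.eq_castSucc_or_eq_last j with ⟨j', rfl⟩ | rfl
  · have hij' : i < Fin.last (m+1) := lt_of_lt_of_le hij (Fin.le_last _)
    obtain ⟨i', rfl⟩ := (Fin.eq_castSucc_or_eq_last i).resolve_right (by rintro rfl; exact absurd hij' (lt_irrefl _))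
    rw [Fin.snoc_castSucc, Fin.snoc_castSucc]
    exact hst (by exact_mod_cast hij)
  · rw [Fin.snoc_last]
    obtain ⟨i', rfl⟩ := (Fin.eq_castSucc_or_eq_last i).resolve_right (by rintro rfl; exact absurd hij (lt_irrefl _))
    rw [Fin.snoc_castSucc]
    exact lt_of_le_of_lt (hst.monotone (Fin.le_last _)) hp'

lemma snoc_sum (g : ℝ → ℝ → ℝ) {m : ℕ} (x : Fin (m+1) → ℝ) (p' : ℝ) :
    (∑ i : Fin (m+1), g ((Fin.snoc x p' : Fin (m+2) → ℝ) i.succ)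
        ((Fin.snoc x p' : Fin (m+2) → ℝ) i.castSucc))
      = (∑ i : Fin m, g (x i.succ) (x i.castSucc)) + g p' (x (Fin.last m)) := by
  rw [Fin.sum_univ_castSucc]
  congr 1
  · refine Finset.sum_congr rfl fun i _ => ?_
    rw [Fin.succ_castSucc, Fin.snoc_castSucc, Fin.snoc_castSucc]
  · rw [Fin.succ_last, Fin.snoc_last, Fin.snoc_castSucc]


lemma snoc_mem {m : ℕ} {x : Fin (m+1) → ℝ} (hmem : ∀ i, x i ∈ Set.Icc a b) {p' : ℝ}
    (hp : p' ∈ Set.Icc a b) : ∀ i, (Fin.snoc x p' : Fin (m+2) → ℝ) i ∈ Set.Icc a b := by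
  intro i
  rcases Fin.eq_castSucc_or_eq_last i with ⟨i', rfl⟩ | rfl
  · rw [Fin.snoc_castSucc]; exact hmem i'
  · rw [Fin.snoc_last]; exact hp

lemma nodeval_pos {j : ℕ} (hj : 1 ≤ j)
    (hcond : c/2 < dist (f (tau f a b c j)) (vv f a b c (j-1))) :
    nodeval f a b c j = f (tau f a b c j) := by
  unfold nodeval; rw [if_neg (by omega), if_pos hcond]

lemma nodeval_neg {j : ℕ} (hj : 1 ≤ j)
    (hcond : ¬ c/2 < dist (f (tau f a b c j)) (vv f a b c (j-1))) :
    nodeval f a b c j = vv f a b c (j-1) := by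
  unfold nodeval; rw [if_neg (by omega), if_neg hcond]

lemma useq_1 : useq f a b c 1 = vv f a b c 0 := by
  have h := useq_odd f a b c 0
  rwa [show 2*0+1 = 1 from by ring] at h

lemma useq_0 : useq f a b c 0 = f a := by
  have h := useq_even f a b c 0
  rw [show 2*0 = 0 from by ring] at h
  rw [h, nodeval_zero]

lemma useq_e (k : ℕ) : useq f a b c (2*k+2) = nodeval f a b c (k+1) := by
  have h := useq_even f a b c (k+1)
  rwa [show 2*(k+1) = 2*k+2 from by ring] at h

lemma useq_o (k : ℕ) : useq f a b c (2*k+3) = vv f a b c (k+1) := by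
  have h := useq_odd f a b c (k+1)
  rwa [show 2*(k+1)+1 = 2*k+3 from by ring] at h

lemma Fcum_succ (j : ℕ) :
    Fcum f a b c (j+1) = Fcum f a b c j + dist (useq f a b c (j+1)) (useq f a b c j) :=
  Finset.sum_range_succ _ _

lemma stepB (hab : a < b) (hc : 0 < c) (hf : Regulated f a b) {N : ℕ}
    (hNlt : ∀ k', k' < N → tau f a b c k' < b)
    {l δ ε : ℝ} (hl : 1 < l) (hδ : l * δ = (l-1) * (c/2)) (hε : 0 < ε) :
    ∀ k, k < N → ∃ (m : ℕ) (x : Fin (m+1) → ℝ), StrictMono x ∧ (∀ i, x i ∈ Set.Icc a b) ∧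
      x (Fin.last m) < tau f a b c (k+1) ∧
      dist (f (x (Fin.last m))) (vv f a b c k) ≤ ε ∧
      Fcum f a b c (2*k+1) ≤
        l * (∑ i : Fin m, max (dist (f (x i.succ)) (f (x i.castSucc)) - δ) 0)
          + l * (2*(k:ℝ)+1) * ε := by
  have hl0 : (0:ℝ) < l := by linarith
  intro k
  induction k with
  | zero =>
    intro h0N
    have h0b : tau f a b c 0 < b := hNlt 0 h0N
    have hab1 : a < tau f a b c 1 := by
      have := tau_lt_succ f a b c hab hc hf h0b
      rwa [tau_zero] at this
    have hF1 : Fcum f a b c 1 = dist (vv f a b c 0) (f a) := by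
      rw [show (1:ℕ) = 0 + 1 from rfl, Fcum_succ]
      simp only [show (0:ℕ)+1 = 1 from rfl, useq_1, useq_0]
      simp [Fcum]
    by_cases h0 : dist (rlim f a) (f a) < c / 2
    · have hv0 : vv f a b c 0 = f a := by rw [vv_zero, if_pos h0]
      refine ⟨0, fun _ => a, ?_, ?_, ?_, ?_, ?_⟩
      · intro i j hij
        exact absurd (Fin.lt_iff_val_lt_val.mp hij) (by omega)
      · intro i; exact ⟨le_refl a, hab.le⟩
      · exact hab1
      · rw [hv0]; simp [hε.le]
      · rw [hF1, hv0]
        simp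
        positivity
    · have hv0 : vv f a b c 0 = rlim f a := by rw [vv_zero, if_neg h0]
      obtain ⟨w, hw1, hw2, hw3⟩ := exists_w f a b c hab hc hf hNlt h0N hε
      rw [tau_zero] at hw1 hw3
      set x : Fin 2 → ℝ := Fin.snoc (fun _ : Fin 1 => a) w with hx
      have hstx : StrictMono x :=
        snoc_strictMono (fun i j hij => absurd (Fin.lt_iff_val_lt_val.mp hij) (by omega)) hw1
      have hwb : w ≤ b := le_of_lt (lt_of_lt_of_le hw2 (tau_le f a b c hab.le 1))
      have hmemx : ∀ i, x i ∈ Set.Icc a b :=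
        snoc_mem a b (fun _ => ⟨le_refl a, hab.le⟩) ⟨hw1.le, hwb⟩
      have hlastx : x (Fin.last 1) = w := Fin.snoc_last _ _
      have hsumx : (∑ i : Fin 1, max (dist (f (x i.succ)) (f (x i.castSucc)) - δ) 0)
          = max (dist (f w) (f a) - δ) 0 := by
        have h := snoc_sum (fun p q => max (dist (f p) (f q) - δ) 0) (fun _ : Fin 1 => a) w
        simpa [hx] using h
      have hJ : c/2 ≤ dist (vv f a b c 0) (f a) := by rw [hv0]; exact not_lt.mp h0
      have hd : dist (vv f a b c 0) (f a) - ε ≤ dist (f w) (f a) := by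
        rw [hv0]
        have htri := dist_triangle (rlim f a) (f w) (f a)
        have h1 : dist (rlim f a) (f w) ≤ ε := by rw [dist_comm]; exact hw3
        linarith
      have hkey := key_ineq hl hδ hJ hd hε.le
      refine ⟨1, x, hstx, hmemx, ?_, ?_, ?_⟩
      · rw [hlastx]; exact hw2
      · rw [hlastx, hv0]; exact hw3
      · rw [hF1, hsumx]
        have hslack : l * (2*((0:ℕ):ℝ)+1) * ε = l * ε := by push_cast; ring
        rw [hslack]
        linarith [hkey]
  | succ k ih =>
    intro hkN
    obtain ⟨m, x, hst, hmem, hlast_lt, hanchor, hsum⟩ := ih (by omega)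
    have hjN : k+1 < N := hkN
    have hjb : tau f a b c (k+1) < b := hNlt _ hjN
    have hkb : tau f a b c k < b := hNlt _ (by omega)
    have hstep2 : tau f a b c (k+1) < tau f a b c (k+1+1) :=
      tau_lt_succ f a b c hab hc hf hjb
    have hτmem : tau f a b c (k+1) ∈ Set.Icc a b :=
      ⟨a_le_tau f a b c hab.le _, tau_le f a b c hab.le _⟩
    have e1 := Fcum_succ f a b c (2*k+1)
    have e2 := Fcum_succ f a b c (2*k+2)
    rw [show 2*k+1+1 = 2*k+2 from by ring, useq_e, useq_odd] at e1
    rw [show 2*k+2+1 = 2*k+3 from by ring, useq_o, useq_e] at e2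
    have hFrec : Fcum f a b c (2*(k+1)+1) = Fcum f a b c (2*k+1)
        + dist (nodeval f a b c (k+1)) (vv f a b c k)
        + dist (vv f a b c (k+1)) (nodeval f a b c (k+1)) := by
      rw [show 2*(k+1)+1 = 2*k+3 from by ring, e2, e1]
    by_cases hcond : c/2 < dist (f (tau f a b c (k+1))) (vv f a b c k)
    · have hnode : nodeval f a b c (k+1) = f (tau f a b c (k+1)) :=
        nodeval_pos f a b c (j := k+1) (by omega) (by rwa [show k+1-1 = k from by omega])
      have hJ1 : c/2 ≤ dist (nodeval f a b c (k+1)) (vv f a b c k) := by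
        rw [hnode]; exact hcond.le
      have hd1 : dist (nodeval f a b c (k+1)) (vv f a b c k) - ε
          ≤ dist (f (tau f a b c (k+1))) (f (x (Fin.last m))) := by
        rw [hnode]
        have htri := dist_triangle (f (tau f a b c (k+1))) (f (x (Fin.last m))) (vv f a b c k)
        linarith [hanchor]
      have hkey1 := key_ineq hl hδ hJ1 hd1 hε.le
      set x1 : Fin (m+2) → ℝ := Fin.snoc x (tau f a b c (k+1)) with hx1
      have hst1 : StrictMono x1 := snoc_strictMono hst hlast_lt
      have hmem1 : ∀ i, x1 i ∈ Set.Icc a b := snoc_mem a b hmem hτmem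
      have hlast1 : x1 (Fin.last (m+1)) = tau f a b c (k+1) := Fin.snoc_last _ _
      have hsum1 : (∑ i : Fin (m+1), max (dist (f (x1 i.succ)) (f (x1 i.castSucc)) - δ) 0)
          = (∑ i : Fin m, max (dist (f (x i.succ)) (f (x i.castSucc)) - δ) 0)
            + max (dist (f (tau f a b c (k+1))) (f (x (Fin.last m))) - δ) 0 := by
        have h := snoc_sum (fun p q => max (dist (f p) (f q) - δ) 0) x (tau f a b c (k+1))
        rw [hx1]
        exact h
      by_cases hβ : dist (rlim f (tau f a b c (k+1))) (f (tau f a b c (k+1))) < c/2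
      · have hvj : vv f a b c (k+1) = f (tau f a b c (k+1)) := by
          rw [vv_succ f a b c hkb, if_pos ⟨hcond, hβ⟩]
        refine ⟨m+1, x1, hst1, hmem1, ?_, ?_, ?_⟩
        · rw [hlast1]; exact hstep2
        · rw [hlast1, hvj]; simp [hε.le]
        · have hzero : dist (vv f a b c (k+1)) (nodeval f a b c (k+1)) = 0 := by
            rw [hvj, hnode, dist_self]
          rw [hFrec, hsum1, hzero]
          have hslack : l * (2*(((k:ℕ)+1:ℕ):ℝ)+1) * ε
              = l * (2*(k:ℝ)+1) * ε + 2*(l*ε) := by push_cast; ring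
          push_cast
          push_cast at hslack
          rw [hslack]
          have hle : 0 ≤ l * ε := by positivity
          linarith [hsum, hkey1]
      · have hvj : vv f a b c (k+1) = rlim f (tau f a b c (k+1)) := by
          rw [vv_succ f a b c hkb, if_neg (by tauto)]
        have hJ2 : c/2 ≤ dist (vv f a b c (k+1)) (nodeval f a b c (k+1)) := by
          rw [hvj, hnode]; exact not_lt.mp hβ
        obtain ⟨w, hw1, hw2, hw3⟩ := exists_w f a b c hab hc hf hNlt hjN hε
        have hd2 : dist (vv f a b c (k+1)) (nodeval f a b c (k+1)) - ε
            ≤ dist (f w) (f (tau f a b c (k+1))) := by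
          rw [hvj, hnode]
          have htri := dist_triangle (rlim f (tau f a b c (k+1))) (f w) (f (tau f a b c (k+1)))
          have h1 : dist (rlim f (tau f a b c (k+1))) (f w) ≤ ε := by rw [dist_comm]; exact hw3
          linarith
        have hkey2 := key_ineq hl hδ hJ2 hd2 hε.le
        set x2 : Fin (m+3) → ℝ := Fin.snoc x1 w with hx2
        have hst2 : StrictMono x2 := snoc_strictMono hst1 (by rw [hlast1]; exact hw1)
        have hwb : w ≤ b := le_of_lt (lt_of_lt_of_le hw2 (tau_le f a b c hab.le _))
        have hwa : a ≤ w := le_of_lt (lt_of_le_of_lt hτmem.1 hw1)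
        have hmem2 : ∀ i, x2 i ∈ Set.Icc a b := snoc_mem a b hmem1 ⟨hwa, hwb⟩
        have hlast2 : x2 (Fin.last (m+2)) = w := Fin.snoc_last _ _
        have hsum2 : (∑ i : Fin (m+2), max (dist (f (x2 i.succ)) (f (x2 i.castSucc)) - δ) 0)
            = (∑ i : Fin (m+1), max (dist (f (x1 i.succ)) (f (x1 i.castSucc)) - δ) 0)
              + max (dist (f w) (f (tau f a b c (k+1))) - δ) 0 := by
          have h := snoc_sum (fun p q => max (dist (f p) (f q) - δ) 0) x1 w
          rw [hlast1] at h
          rw [hx2]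
          exact h
        refine ⟨m+2, x2, hst2, hmem2, ?_, ?_, ?_⟩
        · rw [hlast2]; exact hw2
        · rw [hlast2, hvj]; exact hw3
        · rw [hFrec, hsum2, hsum1]
          have hslack : l * (2*(((k:ℕ)+1:ℕ):ℝ)+1) * ε
              = l * (2*(k:ℝ)+1) * ε + 2*(l*ε) := by push_cast; ring
          push_cast
          push_cast at hslack
          rw [hslack]
          linarith [hsum, hkey1, hkey2]
    · have hnode : nodeval f a b c (k+1) = vv f a b c k := by
        have h := nodeval_neg f a b c (j := k+1) (by omega)
          (by rwa [show k+1-1 = k from by omega])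
        rwa [show k+1-1 = k from by omega] at h
      have hvj : vv f a b c (k+1) = rlim f (tau f a b c (k+1)) := by
        rw [vv_succ f a b c hkb, if_neg (by tauto)]
      have hJ2 : c/2 ≤ dist (vv f a b c (k+1)) (nodeval f a b c (k+1)) := by
        rw [hvj, hnode]
        exact acc_jump f a b c hab hc hf hNlt hjN (not_lt.mp hcond)
      obtain ⟨w, hw1, hw2, hw3⟩ := exists_w f a b c hab hc hf hNlt hjN hε
      have hd2 : dist (vv f a b c (k+1)) (nodeval f a b c (k+1)) - 2*ε
          ≤ dist (f w) (f (x (Fin.last m))) := by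
        rw [hvj, hnode]
        have htri := dist_triangle4 (rlim f (tau f a b c (k+1))) (f w) (f (x (Fin.last m)))
          (vv f a b c k)
        have h1 : dist (rlim f (tau f a b c (k+1))) (f w) ≤ ε := by rw [dist_comm]; exact hw3
        linarith [hanchor]
      have hkey2 := key_ineq hl hδ hJ2 hd2 (by linarith : (0:ℝ) ≤ 2*ε)
      set x1 : Fin (m+2) → ℝ := Fin.snoc x w with hx1
      have hst1 : StrictMono x1 := snoc_strictMono hst (lt_trans hlast_lt hw1)
      have hwb : w ≤ b := le_of_lt (lt_of_lt_of_le hw2 (tau_le f a b c hab.le _))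
      have hwa : a ≤ w := le_of_lt (lt_of_le_of_lt hτmem.1 hw1)
      have hmem1 : ∀ i, x1 i ∈ Set.Icc a b := snoc_mem a b hmem ⟨hwa, hwb⟩
      have hlast1 : x1 (Fin.last (m+1)) = w := Fin.snoc_last _ _
      have hsum1 : (∑ i : Fin (m+1), max (dist (f (x1 i.succ)) (f (x1 i.castSucc)) - δ) 0)
          = (∑ i : Fin m, max (dist (f (x i.succ)) (f (x i.castSucc)) - δ) 0)
            + max (dist (f w) (f (x (Fin.last m))) - δ) 0 := by
        have h := snoc_sum (fun p q => max (dist (f p) (f q) - δ) 0) x w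
        rw [hx1]
        exact h
      refine ⟨m+1, x1, hst1, hmem1, ?_, ?_, ?_⟩
      · rw [hlast1]; exact hw2
      · rw [hlast1, hvj]; exact hw3
      · have hzero : dist (nodeval f a b c (k+1)) (vv f a b c k) = 0 := by
          rw [hnode, dist_self]
        rw [hFrec, hsum1, hzero]
        have hslack : l * (2*(((k:ℕ)+1:ℕ):ℝ)+1) * ε
            = l * (2*(k:ℝ)+1) * ε + 2*(l*ε) := by push_cast; ring
        push_cast
        push_cast at hslack
        rw [hslack]
        linarith [hsum, hkey2]


lemma stepB_final (hab : a < b) (hc : 0 < c) (hf : Regulated f a b) {N : ℕ}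
    (hNb : tau f a b c N = b) (hNlt : ∀ k', k' < N → tau f a b c k' < b) (hN1 : 1 ≤ N)
    {l δ ε : ℝ} (hl : 1 < l) (hδ : l * δ = (l-1) * (c/2)) (hε : 0 < ε) :
    ∃ (m : ℕ) (x : Fin (m+1) → ℝ), StrictMono x ∧ (∀ i, x i ∈ Set.Icc a b) ∧
      Fcum f a b c (2*N) ≤
        l * (∑ i : Fin m, max (dist (f (x i.succ)) (f (x i.castSucc)) - δ) 0)
          + l * (2*(N:ℝ)) * ε := by
  have hl0 : (0:ℝ) < l := by linarith
  obtain ⟨m, x, hst, hmem, hlast_lt, hanchor, hsum⟩ :=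
    stepB f a b c hab hc hf hNlt hl hδ hε (N-1) (by omega)
  rw [show N-1+1 = N from by omega] at hlast_lt
  have e1 := Fcum_succ f a b c (2*(N-1)+1)
  rw [show 2*(N-1)+1+1 = 2*(N-1)+2 from by ring, useq_e, useq_odd,
    show (N-1)+1 = N from by omega, show 2*(N-1)+2 = 2*N from by omega] at e1
  have hcast : ((N-1:ℕ):ℝ) = (N:ℝ) - 1 := by
    push_cast [hN1]
    ring
  by_cases hcond : c/2 < dist (f (tau f a b c N)) (vv f a b c (N-1))
  · have hnode : nodeval f a b c N = f (tau f a b c N) := nodeval_pos f a b c hN1 hcond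
    have hJ : c/2 ≤ dist (nodeval f a b c N) (vv f a b c (N-1)) := by
      rw [hnode]; exact hcond.le
    have hd : dist (nodeval f a b c N) (vv f a b c (N-1)) - ε
        ≤ dist (f (tau f a b c N)) (f (x (Fin.last m))) := by
      rw [hnode]
      have htri := dist_triangle (f (tau f a b c N)) (f (x (Fin.last m))) (vv f a b c (N-1))
      linarith [hanchor]
    have hkey := key_ineq hl hδ hJ hd hε.le
    set x1 : Fin (m+2) → ℝ := Fin.snoc x (tau f a b c N) with hx1
    have hst1 : StrictMono x1 := snoc_strictMono hst hlast_lt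
    have hmem1 : ∀ i, x1 i ∈ Set.Icc a b :=
      snoc_mem a b hmem ⟨a_le_tau f a b c hab.le _, tau_le f a b c hab.le _⟩
    have hsum1 : (∑ i : Fin (m+1), max (dist (f (x1 i.succ)) (f (x1 i.castSucc)) - δ) 0)
        = (∑ i : Fin m, max (dist (f (x i.succ)) (f (x i.castSucc)) - δ) 0)
          + max (dist (f (tau f a b c N)) (f (x (Fin.last m))) - δ) 0 := by
      have h := snoc_sum (fun p q => max (dist (f p) (f q) - δ) 0) x (tau f a b c N)
      rw [hx1]
      exact h
    refine ⟨m+1, x1, hst1, hmem1, ?_⟩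
    rw [e1, hsum1]
    have hslack : l * (2*(N:ℝ)) * ε = l * (2*((N-1:ℕ):ℝ)+1) * ε + l*ε := by
      rw [hcast]; ring
    rw [hslack]
    linarith [hsum, hkey]
  · have hnode : nodeval f a b c N = vv f a b c (N-1) := nodeval_neg f a b c hN1 hcond
    have hzero : dist (nodeval f a b c N) (vv f a b c (N-1)) = 0 := by rw [hnode, dist_self]
    refine ⟨m, x, hst, hmem, ?_⟩
    rw [e1, hzero]
    have hslack : l * (2*((N-1:ℕ):ℝ)+1) * ε ≤ l * (2*(N:ℝ)) * ε := by
      rw [hcast]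
      nlinarith [mul_pos hl0 hε]
    linarith [hsum]

lemma part1TV (hab : a < b) (hc : 0 < c) (hf : Regulated f a b) {N : ℕ}
    (hNb : tau f a b c N = b) (hNlt : ∀ k', k' < N → tau f a b c k' < b) (hN1 : 1 ≤ N)
    {l δ : ℝ} (hl : 1 < l) (hδ : l * δ = (l-1) * (c/2)) :
    ENNReal.ofReal (Fcum f a b c (2*N)) ≤ ENNReal.ofReal l * truncVar f a b δ := by
  have hl0 : (0:ℝ) < l := by linarith
  refine ENNReal.le_of_forall_pos_le_add fun ε' hε' _ => ?_
  have hden : (0:ℝ) < l * (2*(N:ℝ)) + 1 := by positivity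
  set ε : ℝ := ε' / (l * (2*(N:ℝ)) + 1) with hεdef
  have hε'0 : (0:ℝ) < (ε' : ℝ) := NNReal.coe_pos.mpr hε'
  have hε0 : 0 < ε := div_pos hε'0 hden
  obtain ⟨m, x, hst, hmem, hsum⟩ :=
    stepB_final f a b c hab hc hf hNb hNlt hN1 hl hδ hε0
  have hTV : ENNReal.ofReal (∑ i : Fin m, max (dist (f (x i.succ)) (f (x i.castSucc)) - δ) 0)
      ≤ truncVar f a b δ :=
    le_iSup_of_le m (le_iSup_of_le x (le_iSup_of_le hst (le_iSup_of_le hmem le_rfl)))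
  have hsmall : l * (2*(N:ℝ)) * ε ≤ (ε' : ℝ) := by
    rw [hεdef]
    have h1 : l * (2*(N:ℝ)) * ((ε':ℝ) / (l * (2*(N:ℝ)) + 1))
        = (l * (2*(N:ℝ)) / (l * (2*(N:ℝ)) + 1)) * (ε':ℝ) := by ring
    rw [h1]
    have h2 : l * (2*(N:ℝ)) / (l * (2*(N:ℝ)) + 1) ≤ 1 := (div_le_one hden).mpr (by linarith)
    nlinarith
  calc ENNReal.ofReal (Fcum f a b c (2*N))
      ≤ ENNReal.ofReal (l * (∑ i : Fin m, max (dist (f (x i.succ)) (f (x i.castSucc)) - δ) 0)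
          + l * (2*(N:ℝ)) * ε) := ENNReal.ofReal_le_ofReal hsum
    _ ≤ ENNReal.ofReal (l * (∑ i : Fin m, max (dist (f (x i.succ)) (f (x i.castSucc)) - δ) 0))
          + ENNReal.ofReal (l * (2*(N:ℝ)) * ε) := ENNReal.ofReal_add_le
    _ ≤ ENNReal.ofReal l * ENNReal.ofReal (∑ i : Fin m, max (dist (f (x i.succ)) (f (x i.castSucc)) - δ) 0)
          + (ε' : ℝ≥0∞) := by
        refine add_le_add ?_ ?_
        · rw [ENNReal.ofReal_mul hl0.le]
        · calc ENNReal.ofReal (l * (2*(N:ℝ)) * ε) ≤ ENNReal.ofReal (ε' : ℝ) :=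
                ENNReal.ofReal_le_ofReal hsmall
            _ = (ε' : ℝ≥0∞) := ENNReal.ofReal_coe_nnreal
    _ ≤ ENNReal.ofReal l * truncVar f a b δ + (ε' : ℝ≥0∞) :=
        add_le_add_left (mul_le_mul_right hTV _) _


lemma part1 (hab : a < b) (hc : 0 < c) (hf : Regulated f a b) {l : ℝ} (hl : 1 < l) :
    ∃ g : ℝ → E, IsStepOn g a b ∧
      (∀ t ∈ Set.Icc a b, dist (f t) (g t) ≤ c / 2) ∧
      truncVar g a b 0 ≤ ENNReal.ofReal l * truncVar f a b ((l - 1) * c / (2 * l)) := by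
  have hex := exists_tau_eq f a b c hab hc hf
  set N := Nat.find hex with hNdef
  have hNb : tau f a b c N = b := Nat.find_spec hex
  have hNlt : ∀ k, k < N → tau f a b c k < b := fun k hk =>
    lt_of_le_of_ne (tau_le f a b c hab.le k) (Nat.find_min hex hk)
  have hN1 : 1 ≤ N := by
    by_contra h0
    have : N = 0 := by omega
    rw [this, tau_zero] at hNb
    exact absurd hNb (ne_of_lt hab)
  have hl0 : (0:ℝ) < l := by linarith
  set δ : ℝ := (l - 1) * c / (2 * l) with hδdef
  have hδ : l * δ = (l-1) * (c/2) := by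
    rw [hδdef]
    field_simp
  refine ⟨fc f a b c N, fc_isStep f a b c hab hNb, ?_, ?_⟩
  · intro t ht
    exact fc_dist f a b c hab hc hf hNb hNlt ht
  · exact le_trans (truncVar_fc_le f a b c hab hc hf hNb hNlt)
      (part1TV f a b c hab hc hf hNb hNlt hN1 hl hδ)

end

end StepAux

theorem stmt_1 {E : Type*} [PseudoMetricSpace E] (a b c : ℝ) (hab : a < b) (hc : 0 < c)
    (f : ℝ → E) (hf : Regulated f a b) :
    (∀ l : ℝ, 1 < l → ∃ fc : ℝ → E, IsStepOn fc a b ∧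
      (∀ t ∈ Set.Icc a b, dist (f t) (fc t) ≤ c / 2) ∧
      truncVar fc a b 0 ≤ ENNReal.ofReal l * truncVar f a b ((l - 1) * c / (2 * l))) ∧
    truncVar f a b c ≤
      (⨅ (g : ℝ → E) (_ : ∀ t ∈ Set.Icc a b, dist (f t) (g t) ≤ c / 2), truncVar g a b 0) ∧
    (⨅ (g : ℝ → E) (_ : ∀ t ∈ Set.Icc a b, dist (f t) (g t) ≤ c / 2), truncVar g a b 0) ≤
      ⨅ (l : ℝ) (_ : 1 < l), ENNReal.ofReal l * truncVar f a b ((l - 1) * c / (2 * l)) := by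
  refine ⟨fun l hl => StepAux.part1 f a b c hab hc hf hl, ?_, ?_⟩
  · refine le_iInf fun g => le_iInf fun hg => ?_
    refine iSup_le fun n => iSup_le fun t => iSup_le fun hst => iSup_le fun hmem => ?_
    have hterm : ∀ i : Fin n,
        max (dist (f (t i.succ)) (f (t i.castSucc)) - c) 0
          ≤ max (dist (g (t i.succ)) (g (t i.castSucc)) - 0) 0 := by
      intro i
      have htri := dist_triangle4 (f (t i.succ)) (g (t i.succ)) (g (t i.castSucc))
        (f (t i.castSucc))
      have h1 := hg (t i.succ) (hmem i.succ)
      have h2 := hg (t i.castSucc) (hmem i.castSucc)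
      rw [dist_comm (g (t i.castSucc)) (f (t i.castSucc))] at htri
      refine max_le ?_ (le_max_right _ _)
      have h3 : (0:ℝ) ≤ dist (g (t i.succ)) (g (t i.castSucc)) := dist_nonneg
      have h4 : dist (g (t i.succ)) (g (t i.castSucc)) - 0
          ≤ max (dist (g (t i.succ)) (g (t i.castSucc)) - 0) 0 := le_max_left _ _
      linarith
    calc ENNReal.ofReal (∑ i : Fin n, max (dist (f (t i.succ)) (f (t i.castSucc)) - c) 0)
        ≤ ENNReal.ofReal (∑ i : Fin n, max (dist (g (t i.succ)) (g (t i.castSucc)) - 0) 0) :=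
          ENNReal.ofReal_le_ofReal (Finset.sum_le_sum fun i _ => hterm i)
      _ ≤ truncVar g a b 0 :=
          le_iSup_of_le n (le_iSup_of_le t (le_iSup_of_le hst (le_iSup_of_le hmem le_rfl)))
  · refine le_iInf fun l => le_iInf fun hl => ?_
    obtain ⟨g, hstep, hdist, hTV⟩ := StepAux.part1 f a b c hab hc hf hl
    exact le_trans (iInf₂_le g hdist) hTV
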